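/- The uniform probability measure ρ_{S,t} on 𝒳^{S,t}, given by ρ_{S,t}(Y) = Z_{S,t} ∏_{i<j}(y_i-y_j)^2 ∏_i w^{S,t}(y_i) with weight w^{S,t}(x) = 1/[x!(t+N-1-x)!(S+N-1-x)!(T-t-S+x)!], is preserved by the stochastic matrix P^{S,t}_{t+}: for all Y ∈ 𝒳^{S,t+1}, ρ_{S,t+1}(Y) = Σ_{X ∈ 𝒳^{S,t}} P^{S,t}_{t+}(X,Y) ρ_{S,t}(X). -/

import Mathlib

open Finset

noncomputable def poch (a : ℝ) (n : ℕ) : ℝ := ∏ k ∈ Finset.range n, (a + k)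

noncomputable def pairProd {N : ℕ} (f : Fin N → ℤ) : ℝ :=
  ∏ p ∈ Finset.univ.filter (fun p : Fin N × Fin N => p.1 < p.2), ((f p.2 - f p.1 : ℤ) : ℝ)

noncomputable def secX (N T S t : ℕ) : Finset ℤ :=
  Finset.Icc (max 0 ((t : ℤ) + S - T)) (min ((t : ℤ) + N - 1) ((S : ℤ) + N - 1))

noncomputable def Xcal (N T S t : ℕ) : Finset (Fin N → ℤ) :=
  (Fintype.piFinset fun _ => secX N T S t).filter
    (fun f => ∀ i j : Fin N, i < j → f i < f j)

noncomputable def Ptp (N T S t : ℕ) (X Y : Fin N → ℤ) : ℝ :=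
  if ∀ i, Y i = X i ∨ Y i = X i + 1 then
    (pairProd Y *
      ∏ i, (if Y i = X i + 1 then (N : ℝ) + S - X i - 1 else (X i : ℝ) + T - t - S)) /
      (poch ((T : ℝ) - t) N * pairProd X)
  else 0

/-- The weight w^{S,t}(x) = 1/[x!(t+N-1-x)!(S+N-1-x)!(T-t-S+x)!]. -/
noncomputable def w (N T S t : ℕ) (x : ℤ) : ℝ :=
  1 / ((Nat.factorial x.toNat : ℝ) * (Nat.factorial ((t : ℤ) + N - 1 - x).toNat : ℝ) *
    (Nat.factorial ((S : ℤ) + N - 1 - x).toNat : ℝ) *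
    (Nat.factorial ((T : ℤ) - t - S + x).toNat : ℝ))

/-- ρ_{S,t}(Y) = Z · ∏_{i<j}(y_i-y_j)² · ∏_i w^{S,t}(y_i), with normalization Z. -/
noncomputable def rho (N T S t : ℕ) (Z : ℝ) (Y : Fin N → ℤ) : ℝ :=
  Z * (pairProd Y) ^ 2 * ∏ i, w N T S t (Y i)

section Aux

open Polynomial

lemma pairProd_eq_det {N : ℕ} (f : Fin N → ℤ) :
    pairProd f = (Matrix.vandermonde fun i => (f i : ℝ)).det := by
  rw [Matrix.det_vandermonde, pairProd, Finset.prod_sigma']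
  refine (Finset.prod_nbij' (fun p => (p.1, p.2)) (fun p => ⟨p.1, p.2⟩) ?_ ?_ ?_ ?_ ?_).symm <;>
    simp [Finset.mem_Ioi]



noncomputable def Pj (α β : ℝ) (j : ℕ) : ℝ[X] :=
  Polynomial.C β * X ^ j + Polynomial.C α * (X - 1) ^ j + X * ((X - 1) ^ j - X ^ j)

lemma coeff_X_sub_one_pow (j k : ℕ) : ((X - 1 : ℝ[X]) ^ j).coeff k = (-1) ^ (j - k) * j.choose k := by
  have h : (X - 1 : ℝ[X]) = X + Polynomial.C (-1) := by
    rw [map_neg, map_one]; ring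
  rw [h, Polynomial.coeff_X_add_C_pow]

lemma eval_Pj (α β : ℝ) (j : ℕ) (x : ℝ) :
    (Pj α β j).eval x = (β - x) * x ^ j + (α + x) * (x - 1) ^ j := by
  simp [Pj]; ring

lemma coeff_Pj_gt (α β : ℝ) (j k : ℕ) (h : j < k) : (Pj α β j).coeff k = 0 := by
  match k, h with
  | (k+1), h =>
  simp only [Pj, Polynomial.coeff_add, Polynomial.coeff_C_mul, Polynomial.coeff_X_pow,
    Polynomial.coeff_X_mul, Polynomial.coeff_sub, coeff_X_sub_one_pow]
  have h2 : j.choose (k + 1) = 0 := Nat.choose_eq_zero_of_lt (by omega)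
  rcases eq_or_lt_of_le (by omega : j ≤ k) with rfl | h3
  · simp [Nat.choose_self, if_neg (by omega : ¬ j + 1 = j), if_neg (by omega : ¬ j = j + 1), h2]
  · have h4 : j.choose k = 0 := Nat.choose_eq_zero_of_lt h3
    simp [h4, h2, if_neg (by omega : ¬ k + 1 = j), if_neg (by omega : ¬ k = j)]

lemma natDegree_Pj_le (α β : ℝ) (j : ℕ) : (Pj α β j).natDegree ≤ j :=
  Polynomial.natDegree_le_iff_coeff_eq_zero.mpr fun _ h => coeff_Pj_gt α β j _ h

lemma coeff_Pj_diag (α β : ℝ) (j : ℕ) : (Pj α β j).coeff j = α + β - j := by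
  rcases Nat.eq_zero_or_pos j with rfl | hj
  · simp [Pj]; ring
  · match j, hj with
    | (j+1), _ =>
    simp only [Pj, Polynomial.coeff_add, Polynomial.coeff_C_mul, Polynomial.coeff_X_pow,
      coeff_X_sub_one_pow, Polynomial.coeff_X_mul, Polynomial.coeff_sub]
    rw [if_neg (by omega : ¬ j = j + 1), Nat.sub_self, Nat.choose_self,
      Nat.choose_succ_self_right]
    simp only [if_true, eq_self_iff_true]
    have : j + 1 - j = 1 := by omega
    rw [this]
    push_cast
    ring

lemma lemA (N : ℕ) (f : Fin N → ℤ) (α β : ℝ) :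
    ∑ ε ∈ Fintype.piFinset (fun _ : Fin N => ({0, 1} : Finset ℤ)),
      pairProd (fun i => f i - ε i) * ∏ i, (if ε i = 1 then α + (f i : ℝ) else β - (f i : ℝ))
    = pairProd f * ∏ k ∈ Finset.range N, (α + β - k) := by
  classical
  -- row function
  set r : Fin N → ℤ → (Fin N → ℝ) := fun i e j =>
    (if e = 1 then α + (f i : ℝ) else β - (f i : ℝ)) * ((f i : ℝ) - (e : ℝ)) ^ (j : ℕ) with hr
  have step1 : ∀ ε ∈ Fintype.piFinset (fun _ : Fin N => ({0, 1} : Finset ℤ)),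
      pairProd (fun i => f i - ε i) * ∏ i, (if ε i = 1 then α + (f i : ℝ) else β - (f i : ℝ))
      = Matrix.detRowAlternating (fun i => r i (ε i)) := by
    intro ε hε
    have : Matrix.detRowAlternating (fun i => r i (ε i)) =
        (Matrix.of fun i j => (if ε i = 1 then α + (f i : ℝ) else β - (f i : ℝ)) *
          (Matrix.vandermonde fun i => ((f i - ε i : ℤ) : ℝ)) i j).det := by
      congr 1
      ext i j
      simp only [hr, Matrix.vandermonde, Matrix.of_apply]
      push_cast
      ring
    rw [this, Matrix.det_mul_column, ← pairProd_eq_det]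
    ring
  rw [Finset.sum_congr rfl step1]
  have step2 : ∑ ε ∈ Fintype.piFinset (fun _ : Fin N => ({0, 1} : Finset ℤ)),
      Matrix.detRowAlternating (fun i => r i (ε i))
      = Matrix.detRowAlternating (fun i => ∑ e ∈ ({0, 1} : Finset ℤ), r i e) :=
    (Matrix.detRowAlternating.toMultilinearMap.map_sum_finset
        (fun i e => r i e) (fun _ => ({0, 1} : Finset ℤ))).symm
  rw [step2]
  have step3 : (fun i => ∑ e ∈ ({0, 1} : Finset ℤ), r i e)
      = Matrix.of fun (i j : Fin N) => (Pj α β (j : ℕ)).eval ((f i : ℝ)) := by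
    ext i j
    rw [Finset.sum_pair (by norm_num : (0 : ℤ) ≠ 1)]
    simp only [hr, eval_Pj, Matrix.of_apply, Pi.add_apply]
    norm_num
  show Matrix.det _ = _
  rw [step3, Matrix.eval_matrixOfPolynomials_eq_vandermonde_mul_matrixOfPolynomials
      (fun i => (f i : ℝ)) (fun j => Pj α β (j : ℕ)) (fun j => natDegree_Pj_le α β j),
    Matrix.det_mul, ← pairProd_eq_det,
    Matrix.det_of_upperTriangular (by
      intro i j hij
      exact coeff_Pj_gt α β (j : ℕ) (i : ℕ) hij)]
  congr 1
  rw [← Fin.prod_univ_eq_prod_range (fun k => (α + β - k))]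
  exact Finset.prod_congr rfl fun j _ => by rw [Matrix.of_apply, coeff_Pj_diag]


lemma w_step (N T S t : ℕ) (x y : ℤ)
    (hx : x ∈ secX N T S t) (hy : y ∈ secX N T S (t + 1)) (hxy : y = x ∨ y = x + 1) :
    (if y = x + 1 then (N : ℝ) + S - x - 1 else (x : ℝ) + T - t - S) * w N T S t x
    = (if y = x + 1 then (0 : ℝ) + (y : ℝ) else ((t : ℝ) + N) - (y : ℝ)) * w N T S (t + 1) y := by
  simp only [secX, Finset.mem_Icc, le_min_iff, max_le_iff] at hx hy
  obtain ⟨⟨hx1, hx2⟩, hx3, hx4⟩ := hx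
  obtain ⟨⟨hy1, hy2⟩, hy3, hy4⟩ := hy
  rcases hxy with rfl | rfl
  · -- y = y
    rw [if_neg (by omega), if_neg (by omega)]
    simp only [w]
    obtain ⟨a, ha⟩ : ∃ a : ℕ, (a : ℤ) = y := ⟨y.toNat, by omega⟩
    obtain ⟨b, hb⟩ : ∃ b : ℕ, (b : ℤ) = (t : ℤ) + N - 1 - y := ⟨_, Int.toNat_of_nonneg (by omega)⟩
    obtain ⟨c, hc⟩ : ∃ c : ℕ, (c : ℤ) = (S : ℤ) + N - 1 - y := ⟨_, Int.toNat_of_nonneg (by omega)⟩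
    obtain ⟨d, hd⟩ : ∃ d : ℕ, (d : ℤ) = (T : ℤ) - (t + 1) - S + y :=
      ⟨_, Int.toNat_of_nonneg (by omega)⟩
    have e1 : y.toNat = a := by omega
    have e2 : ((t : ℤ) + N - 1 - y).toNat = b := by omega
    have e3 : ((S : ℤ) + N - 1 - y).toNat = c := by omega
    have e4 : ((T : ℤ) - t - S + y).toNat = d + 1 := by omega
    have e2' : (((t : ℕ) + 1 : ℕ) + (N : ℤ) - 1 - y).toNat = b + 1 := by push_cast; omega
    have e4' : ((T : ℤ) - ((t : ℕ) + 1 : ℕ) - S + y).toNat = d := by push_cast; omega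
    rw [e1, e2, e3, e4]
    rw [show ((((t + 1 : ℕ) : ℤ)) + N - 1 - y).toNat = b + 1 by push_cast; omega,
      show ((T : ℤ) - ((t + 1 : ℕ) : ℤ) - S + y).toNat = d by push_cast; omega]
    have hxR : (y : ℝ) = a := by exact_mod_cast congrArg (fun z : ℤ => (z : ℝ)) ha.symm
    have hdR : (y : ℝ) + T - t - S = (d : ℝ) + 1 := by
      have := congrArg (fun z : ℤ => (z : ℝ)) hd; push_cast at this; linarith
    have hbR : ((t : ℝ) + N) - (y : ℝ) = (b : ℝ) + 1 := by
      have := congrArg (fun z : ℤ => (z : ℝ)) hb; push_cast at this; linarith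
    rw [hdR, hbR, Nat.factorial_succ (d), Nat.factorial_succ (b)]
    have f1 : (Nat.factorial a : ℝ) ≠ 0 := Nat.cast_ne_zero.mpr (Nat.factorial_ne_zero _)
    have f2 : (Nat.factorial b : ℝ) ≠ 0 := Nat.cast_ne_zero.mpr (Nat.factorial_ne_zero _)
    have f3 : (Nat.factorial c : ℝ) ≠ 0 := Nat.cast_ne_zero.mpr (Nat.factorial_ne_zero _)
    have f4 : (Nat.factorial d : ℝ) ≠ 0 := Nat.cast_ne_zero.mpr (Nat.factorial_ne_zero _)
    have f5 : ((b : ℝ) + 1) ≠ 0 := by positivity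
    have f6 : ((d : ℝ) + 1) ≠ 0 := by positivity
    field_simp
    push_cast
    ring
  · -- y = x + 1
    rw [if_pos rfl, if_pos rfl]
    simp only [w]
    obtain ⟨a, ha⟩ : ∃ a : ℕ, (a : ℤ) = x := ⟨x.toNat, by omega⟩
    obtain ⟨b, hb⟩ : ∃ b : ℕ, (b : ℤ) = (t : ℤ) + N - 1 - x := ⟨_, Int.toNat_of_nonneg (by omega)⟩
    obtain ⟨c, hc⟩ : ∃ c : ℕ, (c : ℤ) = (S : ℤ) + N - 1 - (x + 1) :=
      ⟨_, Int.toNat_of_nonneg (by omega)⟩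
    obtain ⟨d, hd⟩ : ∃ d : ℕ, (d : ℤ) = (T : ℤ) - t - S + x := ⟨_, Int.toNat_of_nonneg (by omega)⟩
    rw [show x.toNat = a by omega, show ((t : ℤ) + N - 1 - x).toNat = b by omega,
      show ((S : ℤ) + N - 1 - x).toNat = c + 1 by omega,
      show ((T : ℤ) - t - S + x).toNat = d by omega,
      show (x + 1).toNat = a + 1 by omega,
      show ((((t + 1 : ℕ) : ℤ)) + N - 1 - (x + 1)).toNat = b by push_cast; omega,
      show ((S : ℤ) + N - 1 - (x + 1)).toNat = c by omega,
      show ((T : ℤ) - ((t + 1 : ℕ) : ℤ) - S + (x + 1)).toNat = d by push_cast; omega]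
    have hcR : (N : ℝ) + S - (x : ℝ) - 1 = (c : ℝ) + 1 := by
      have := congrArg (fun z : ℤ => (z : ℝ)) hc; push_cast at this; linarith
    have haR : (0 : ℝ) + ((x + 1 : ℤ) : ℝ) = (a : ℝ) + 1 := by
      have := congrArg (fun z : ℤ => (z : ℝ)) ha; push_cast at this ⊢; linarith
    rw [hcR, haR, Nat.factorial_succ c, Nat.factorial_succ a]
    have f1 : (Nat.factorial a : ℝ) ≠ 0 := Nat.cast_ne_zero.mpr (Nat.factorial_ne_zero _)
    have f2 : (Nat.factorial b : ℝ) ≠ 0 := Nat.cast_ne_zero.mpr (Nat.factorial_ne_zero _)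
    have f3 : (Nat.factorial c : ℝ) ≠ 0 := Nat.cast_ne_zero.mpr (Nat.factorial_ne_zero _)
    have f4 : (Nat.factorial d : ℝ) ≠ 0 := Nat.cast_ne_zero.mpr (Nat.factorial_ne_zero _)
    have f5 : ((a : ℝ) + 1) ≠ 0 := by positivity
    have f6 : ((c : ℝ) + 1) ≠ 0 := by positivity
    field_simp
    push_cast
    ring

lemma mem_Xcal {N T S t : ℕ} {f : Fin N → ℤ} :
    f ∈ Xcal N T S t ↔ (∀ i, f i ∈ secX N T S t) ∧ ∀ i j : Fin N, i < j → f i < f j := by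
  simp [Xcal, Fintype.mem_piFinset]

lemma mem_secX {N T S t : ℕ} {x : ℤ} :
    x ∈ secX N T S t ↔ (0 ≤ x ∧ (t : ℤ) + S - T ≤ x) ∧ x ≤ (t : ℤ) + N - 1 ∧ x ≤ (S : ℤ) + N - 1 := by
  simp [secX, Finset.mem_Icc, le_min_iff, max_le_iff]

lemma mem_cube {N : ℕ} {ε : Fin N → ℤ} :
    ε ∈ Fintype.piFinset (fun _ : Fin N => ({0, 1} : Finset ℤ)) ↔ ∀ i, ε i = 0 ∨ ε i = 1 := by
  simp [Fintype.mem_piFinset]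

lemma pairProd_eq_zero {N : ℕ} {f : Fin N → ℤ} {i j : Fin N} (hij : i < j) (h : f i = f j) :
    pairProd f = 0 :=
  Finset.prod_eq_zero (Finset.mem_filter.mpr ⟨Finset.mem_univ ((i, j) : Fin N × Fin N), hij⟩)
    (by simp [h])

lemma pairProd_pos {N : ℕ} {f : Fin N → ℤ} (h : ∀ i j : Fin N, i < j → f i < f j) :
    0 < pairProd f :=
  Finset.prod_pos fun p hp => by
    have h2 := (Finset.mem_filter.mp hp).2
    have h3 := h _ _ h2
    exact_mod_cast Int.sub_pos.mpr h3

lemma pairProd_shift {N : ℕ} (f : Fin N → ℤ) : pairProd (fun i => f i + 1) = pairProd f := by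
  refine Finset.prod_congr rfl fun p _ => ?_
  norm_num

lemma poch_pos {T t : ℕ} (ht : t < T) (n : ℕ) : 0 < poch ((T : ℝ) - t) n := by
  refine Finset.prod_pos fun k _ => ?_
  have : (t : ℝ) + 1 ≤ T := by exact_mod_cast ht
  have : (0 : ℝ) ≤ k := Nat.cast_nonneg k
  linarith

lemma stoch (N T S t : ℕ) (ht : t < T) (X : Fin N → ℤ) (hX : X ∈ Xcal N T S t) :
    ∑ Y ∈ Xcal N T S (t + 1), Ptp N T S t X Y = 1 := by
  classical
  obtain ⟨hXbox, hXinc⟩ := mem_Xcal.mp hX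
  have hpp : 0 < pairProd X := pairProd_pos hXinc
  have hpoch : 0 < poch ((T : ℝ) - t) N := poch_pos ht N
  have h0 : ∀ Y ∈ Xcal N T S (t + 1), Ptp N T S t X Y ≠ 0 →
      (∀ i, Y i = X i ∨ Y i = X i + 1) := by
    intro Y _ hne
    by_contra hc
    exact hne (by rw [Ptp, if_neg hc])
  rw [← Finset.sum_filter_of_ne h0]
  have h1 : ∀ Y ∈ (Xcal N T S (t + 1)).filter (fun Y => ∀ i, Y i = X i ∨ Y i = X i + 1),
      Ptp N T S t X Y = (pairProd Y *
        ∏ i, (if Y i = X i + 1 then (N : ℝ) + S - X i - 1 else (X i : ℝ) + T - t - S)) /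
        (poch ((T : ℝ) - t) N * pairProd X) := by
    intro Y hY
    rw [Ptp, if_pos (Finset.mem_filter.mp hY).2]
  rw [Finset.sum_congr rfl h1, ← Finset.sum_div]
  have key : ∑ Y ∈ (Xcal N T S (t + 1)).filter (fun Y => ∀ i, Y i = X i ∨ Y i = X i + 1),
      pairProd Y * ∏ i, (if Y i = X i + 1 then (N : ℝ) + S - X i - 1 else (X i : ℝ) + T - t - S)
      = pairProd X * poch ((T : ℝ) - t) N := by
    have step : ∑ Y ∈ (Xcal N T S (t + 1)).filter (fun Y => ∀ i, Y i = X i ∨ Y i = X i + 1),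
        pairProd Y * ∏ i, (if Y i = X i + 1 then (N : ℝ) + S - X i - 1 else (X i : ℝ) + T - t - S)
        = ∑ ε ∈ (Fintype.piFinset (fun _ : Fin N => ({0, 1} : Finset ℤ))).filter
            (fun ε => (fun i => (X i + 1) - ε i) ∈ Xcal N T S (t + 1)),
          pairProd (fun i => (X i + 1) - ε i) *
            ∏ i, (if ε i = 1 then ((T : ℝ) - t - S - 1) + ((X i + 1 : ℤ) : ℝ)
              else ((N : ℝ) + S) - ((X i + 1 : ℤ) : ℝ)) := by
      refine Finset.sum_nbij' (fun Y => fun i => (X i + 1) - Y i)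
        (fun ε => fun i => (X i + 1) - ε i) ?_ ?_ ?_ ?_ ?_
      · intro Y hY
        obtain ⟨hY1, hY2⟩ := Finset.mem_filter.mp hY
        refine Finset.mem_filter.mpr ⟨mem_cube.mpr fun i => ?_, ?_⟩
        · show X i + 1 - Y i = 0 ∨ X i + 1 - Y i = 1
          rcases hY2 i with h | h <;> omega
        · have e : (fun i => (X i + 1) - ((X i + 1) - Y i)) = Y := by funext i; ring
          rw [show (fun i => (X i + 1) - (fun i => (X i + 1) - Y i) i) = Y from e]
          exact hY1
      · intro ε hε
        obtain ⟨hε1, hε2⟩ := Finset.mem_filter.mp hε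
        refine Finset.mem_filter.mpr ⟨hε2, fun i => ?_⟩
        show X i + 1 - ε i = X i ∨ X i + 1 - ε i = X i + 1
        rcases mem_cube.mp hε1 i with h | h <;> omega
      · intro Y _; funext i; show X i + 1 - (X i + 1 - Y i) = Y i; ring
      · intro ε _; funext i; show X i + 1 - (X i + 1 - ε i) = ε i; ring
      · intro Y hY
        obtain ⟨hY1, hY2⟩ := Finset.mem_filter.mp hY
        have e : (fun i => (X i + 1) - ((fun i => (X i + 1) - Y i) i)) = Y := by
          funext i; show X i + 1 - (X i + 1 - Y i) = Y i; ring
        rw [e]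
        congr 1
        refine Finset.prod_congr rfl fun i _ => ?_
        rcases hY2 i with h | h
        · rw [if_neg (by omega : ¬ Y i = X i + 1),
            if_pos (show (fun i => (X i + 1) - Y i) i = 1 by show X i + 1 - Y i = 1; omega)]
          push_cast
          ring
        · rw [if_pos h,
            if_neg (show ¬ (fun i => (X i + 1) - Y i) i = 1 by show ¬ X i + 1 - Y i = 1; omega)]
          push_cast
          ring
    rw [step]
    have zero_out : ∀ ε ∈ Fintype.piFinset (fun _ : Fin N => ({0, 1} : Finset ℤ)),
        (pairProd (fun i => (X i + 1) - ε i) *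
          ∏ i, (if ε i = 1 then ((T : ℝ) - t - S - 1) + ((X i + 1 : ℤ) : ℝ)
            else ((N : ℝ) + S) - ((X i + 1 : ℤ) : ℝ))) ≠ 0 →
        (fun i => (X i + 1) - ε i) ∈ Xcal N T S (t + 1) := by
      intro ε hε hne
      by_contra hc
      apply hne
      by_cases hinc : ∀ i j : Fin N, i < j → (X i + 1 - ε i) < (X j + 1 - ε j)
      · -- box violation
        have hbox : ¬ ∀ i, X i + 1 - ε i ∈ secX N T S (t + 1) := by
          intro hall
          exact hc (mem_Xcal.mpr ⟨hall, fun i j hij => hinc i j hij⟩)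
        push_neg at hbox
        obtain ⟨i, hi⟩ := hbox
        have hXi := mem_secX.mp (hXbox i)
        rw [mem_secX] at hi
        apply mul_eq_zero_of_right
        refine Finset.prod_eq_zero (Finset.mem_univ i) ?_
        rcases mem_cube.mp hε i with h | h
        · -- ε i = 0, so X i = S + N - 1
          have hXi2 : X i = (S : ℤ) + N - 1 := by push_cast at hi ⊢; omega
          rw [if_neg (by omega : ¬ ε i = 1)]
          have := congrArg (fun z : ℤ => (z : ℝ)) hXi2
          push_cast at this ⊢
          linarith
        · -- ε i = 1, so X i = t + S - T
          have hXi2 : X i = (t : ℤ) + S - T := by push_cast at hi ⊢; omega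
          rw [if_pos h]
          have := congrArg (fun z : ℤ => (z : ℝ)) hXi2
          push_cast at this ⊢
          linarith
      · -- non strictly increasing
        apply mul_eq_zero_of_left
        push_neg at hinc
        obtain ⟨i, j, hij, hle⟩ := hinc
        have hXij := hXinc i j hij
        rcases mem_cube.mp hε i with h1 | h1 <;> rcases mem_cube.mp hε j with h2 | h2 <;>
          exact pairProd_eq_zero hij (show X i + 1 - ε i = X j + 1 - ε j by omega)
    rw [Finset.sum_filter_of_ne zero_out,
      lemA N (fun i => X i + 1) ((T : ℝ) - t - S - 1) ((N : ℝ) + S)]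
    have e2 : pairProd (fun i => X i + 1) = pairProd X := pairProd_shift X
    have e3 : ∏ k ∈ Finset.range N, (((T : ℝ) - t - S - 1) + ((N : ℝ) + S) - (k : ℝ))
        = poch ((T : ℝ) - t) N := by
      rw [poch, ← Finset.prod_range_reflect (fun k => ((T : ℝ) - t) + k) N]
      refine Finset.prod_congr rfl fun k hk => ?_
      have hk' := Finset.mem_range.mp hk
      have hcast : ((N - 1 - k : ℕ) : ℝ) = (N : ℝ) - 1 - k := by
        push_cast [Nat.cast_sub (by omega : k ≤ N - 1), Nat.cast_sub (by omega : 1 ≤ N)]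
        ring
      rw [hcast]
      ring
    rw [e2, e3]
  rw [key]
  field_simp

lemma main_sum (N T S t : ℕ) (ht : t < T) (Z₁ : ℝ) (Y : Fin N → ℤ)
    (hY : Y ∈ Xcal N T S (t + 1)) :
    ∑ X ∈ Xcal N T S t, Ptp N T S t X Y * rho N T S t Z₁ X
    = rho N T S (t + 1)
        (Z₁ * (∏ k ∈ Finset.range N, (((t : ℝ) + N) - k)) / poch ((T : ℝ) - t) N) Y := by
  classical
  obtain ⟨hYbox, hYinc⟩ := mem_Xcal.mp hY
  have hpoch : 0 < poch ((T : ℝ) - t) N := poch_pos ht N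
  have h0 : ∀ X ∈ Xcal N T S t, Ptp N T S t X Y * rho N T S t Z₁ X ≠ 0 →
      (∀ i, Y i = X i ∨ Y i = X i + 1) := by
    intro X _ hne
    by_contra hc
    exact hne (by rw [Ptp, if_neg hc, zero_mul])
  rw [← Finset.sum_filter_of_ne h0]
  have step : ∑ X ∈ (Xcal N T S t).filter (fun X => ∀ i, Y i = X i ∨ Y i = X i + 1),
      Ptp N T S t X Y * rho N T S t Z₁ X
      = ∑ ε ∈ (Fintype.piFinset (fun _ : Fin N => ({0, 1} : Finset ℤ))).filter
          (fun ε => (fun i => Y i - ε i) ∈ Xcal N T S t),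
        Z₁ / poch ((T : ℝ) - t) N * pairProd Y * (∏ i, w N T S (t + 1) (Y i)) *
          (pairProd (fun i => Y i - ε i) *
            ∏ i, (if ε i = 1 then (0 : ℝ) + ((Y i : ℤ) : ℝ)
              else ((t : ℝ) + (N : ℝ)) - ((Y i : ℤ) : ℝ))) := by
    refine Finset.sum_nbij' (fun X => fun i => Y i - X i)
      (fun ε => fun i => Y i - ε i) ?_ ?_ ?_ ?_ ?_
    · intro X hX
      obtain ⟨hX1, hX2⟩ := Finset.mem_filter.mp hX
      refine Finset.mem_filter.mpr ⟨mem_cube.mpr fun i => ?_, ?_⟩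
      · show Y i - X i = 0 ∨ Y i - X i = 1
        rcases hX2 i with h | h <;> omega
      · have e : (fun i => Y i - ((fun i => Y i - X i) i)) = X := by
          funext i; show Y i - (Y i - X i) = X i; ring
        rw [e]
        exact hX1
    · intro ε hε
      obtain ⟨hε1, hε2⟩ := Finset.mem_filter.mp hε
      refine Finset.mem_filter.mpr ⟨hε2, fun i => ?_⟩
      show Y i = Y i - ε i ∨ Y i = Y i - ε i + 1
      rcases mem_cube.mp hε1 i with h | h <;> omega
    · intro X _; funext i; show Y i - (Y i - X i) = X i; ring
    · intro ε _; funext i; show Y i - (Y i - ε i) = ε i; ring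
    · intro X hX
      obtain ⟨hX1, hX2⟩ := Finset.mem_filter.mp hX
      obtain ⟨hXbox, hXinc⟩ := mem_Xcal.mp hX1
      have hppX : 0 < pairProd X := pairProd_pos hXinc
      rw [Ptp, if_pos hX2, rho]
      have hw : ∏ i, ((if Y i = X i + 1 then (N : ℝ) + S - X i - 1
            else (X i : ℝ) + T - t - S) * w N T S t (X i))
          = ∏ i, ((if (fun i => Y i - X i) i = 1 then (0 : ℝ) + ((Y i : ℤ) : ℝ)
              else ((t : ℝ) + (N : ℝ)) - ((Y i : ℤ) : ℝ)) * w N T S (t + 1) (Y i)) := by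
        refine Finset.prod_congr rfl fun i _ => ?_
        rw [w_step N T S t (X i) (Y i) (hXbox i) (hYbox i) (hX2 i)]
        congr 1
        refine if_congr ?_ rfl rfl
        show Y i = X i + 1 ↔ Y i - X i = 1
        omega
      have e : pairProd (fun i => Y i - ((fun i => Y i - X i) i)) = pairProd X := by
        congr 1; funext i; show Y i - (Y i - X i) = X i; ring
      rw [e]
      rw [Finset.prod_mul_distrib, Finset.prod_mul_distrib] at hw
      simp only [zero_add] at hw
      field_simp
      simp only [zero_add]
      linear_combination (Z₁ * pairProd Y) * hw
  rw [step]
  have zero_out : ∀ ε ∈ Fintype.piFinset (fun _ : Fin N => ({0, 1} : Finset ℤ)),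
      (Z₁ / poch ((T : ℝ) - t) N * pairProd Y * (∏ i, w N T S (t + 1) (Y i)) *
        (pairProd (fun i => Y i - ε i) *
          ∏ i, (if ε i = 1 then (0 : ℝ) + ((Y i : ℤ) : ℝ)
            else ((t : ℝ) + (N : ℝ)) - ((Y i : ℤ) : ℝ)))) ≠ 0 →
      (fun i => Y i - ε i) ∈ Xcal N T S t := by
    intro ε hε hne
    by_contra hc
    apply hne
    apply mul_eq_zero_of_right
    by_cases hinc : ∀ i j : Fin N, i < j → (Y i - ε i) < (Y j - ε j)
    · have hbox : ¬ ∀ i, Y i - ε i ∈ secX N T S t := fun hall =>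
        hc (mem_Xcal.mpr ⟨hall, hinc⟩)
      push_neg at hbox
      obtain ⟨i, hi⟩ := hbox
      apply mul_eq_zero_of_right
      refine Finset.prod_eq_zero (Finset.mem_univ i) ?_
      have hYi := mem_secX.mp (hYbox i)
      rw [mem_secX] at hi
      have hcase : (ε i = 1 ∧ Y i = 0) ∨ (ε i = 0 ∧ Y i = (t : ℤ) + N) := by
        rcases mem_cube.mp hε i with h | h
        · right; push_cast at hi hYi ⊢; omega
        · left; push_cast at hi hYi ⊢; omega
      rcases hcase with ⟨h1, h2⟩ | ⟨h1, h2⟩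
      · rw [if_pos h1, h2]; norm_num
      · rw [if_neg (by omega : ¬ ε i = 1)]
        have := congrArg (fun z : ℤ => (z : ℝ)) h2
        push_cast at this ⊢
        linarith
    · apply mul_eq_zero_of_left
      push_neg at hinc
      obtain ⟨i, j, hij, hle⟩ := hinc
      have hYij := hYinc i j hij
      rcases mem_cube.mp hε i with h1 | h1 <;> rcases mem_cube.mp hε j with h2 | h2 <;>
        exact pairProd_eq_zero hij (show Y i - ε i = Y j - ε j by omega)
  rw [Finset.sum_filter_of_ne zero_out, ← Finset.mul_sum,
    lemA N Y 0 ((t : ℝ) + (N : ℝ)), rho]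
  have eP : ∏ k ∈ Finset.range N, ((0 : ℝ) + ((t : ℝ) + (N : ℝ)) - (k : ℝ))
      = ∏ k ∈ Finset.range N, (((t : ℝ) + N) - k) :=
    Finset.prod_congr rfl fun _ _ => by ring
  rw [eP]
  field_simp
end Aux

/-- P^{S,t}_{t+} preserves the (normalized) measures ρ_{S,t}. -/

theorem Ptp_preserves_rho (N T S t : ℕ) (hN : 1 ≤ N) (hS : S ≤ T) (ht : t < T)
    (Z₁ Z₂ : ℝ)
    (h₁ : ∑ X ∈ Xcal N T S t, rho N T S t Z₁ X = 1)
    (h₂ : ∑ Y ∈ Xcal N T S (t + 1), rho N T S (t + 1) Z₂ Y = 1) :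
    ∀ Y ∈ Xcal N T S (t + 1),
      rho N T S (t + 1) Z₂ Y = ∑ X ∈ Xcal N T S t, Ptp N T S t X Y * rho N T S t Z₁ X := by
  classical
  set Z₁' : ℝ := Z₁ * (∏ k ∈ Finset.range N, (((t : ℝ) + N) - k)) / poch ((T : ℝ) - t) N with hZ
  have key : ∀ Y ∈ Xcal N T S (t + 1),
      ∑ X ∈ Xcal N T S t, Ptp N T S t X Y * rho N T S t Z₁ X
        = rho N T S (t + 1) Z₁' Y := fun Y hY => main_sum N T S t ht Z₁ Y hY
  have hsum : ∑ Y ∈ Xcal N T S (t + 1), rho N T S (t + 1) Z₁' Y = 1 := by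
    rw [Finset.sum_congr rfl fun Y hY => (key Y hY).symm, Finset.sum_comm]
    calc ∑ X ∈ Xcal N T S t, ∑ Y ∈ Xcal N T S (t + 1), Ptp N T S t X Y * rho N T S t Z₁ X
        = ∑ X ∈ Xcal N T S t, rho N T S t Z₁ X := by
          refine Finset.sum_congr rfl fun X hX => ?_
          rw [← Finset.sum_mul, stoch N T S t ht X hX, one_mul]
      _ = 1 := h₁
  have hM : ∀ Z : ℝ, ∑ Y ∈ Xcal N T S (t + 1), rho N T S (t + 1) Z Y
      = Z * ∑ Y ∈ Xcal N T S (t + 1), (pairProd Y) ^ 2 * ∏ i, w N T S (t + 1) (Y i) := by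
    intro Z
    rw [Finset.mul_sum]
    exact Finset.sum_congr rfl fun Y _ => by rw [rho]; ring
  have hZeq : Z₂ = Z₁' := by
    have e1 := h₂
    have e2 := hsum
    rw [hM Z₂] at e1
    rw [hM Z₁'] at e2
    by_contra hne
    have hMne : ∑ Y ∈ Xcal N T S (t + 1), (pairProd Y) ^ 2 * ∏ i, w N T S (t + 1) (Y i) ≠ 0 := by
      intro h
      rw [h, mul_zero] at e1
      exact one_ne_zero e1.symm
    exact hne (by
      have := e1.trans e2.symm
      exact mul_right_cancel₀ hMne this)
  intro Y hY
  rw [hZeq, (key Y hY).symm]
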